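/- For every positive integer m and every n ≥ 1, with p = 2m+1, the Fibonacci number F_{p^n} satisfies F_{(2m+1)^n} = ∏_{j=0}^{n-1} [(-1)^m + ∑_{k=0}^{m-1} (-1)^k · L_{2(m-k)(2m+1)^j}], where the identity is understood in the integers. -/

import Mathlib

/-- The Lucas numbers: L 0 = 2, L 1 = 1, L (n+2) = L n + L (n+1). -/
def lucas : ℕ → ℕ
  | 0 => 2
  | 1 => 1
  | n + 2 => lucas n + lucas (n + 1)

open Real

lemma lucas_real : ∀ n, (lucas n : ℝ) = goldenRatio ^ n + goldenConj ^ n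
  | 0 => by norm_num [lucas]
  | 1 => by
      simp only [lucas, pow_one]
      push_cast
      rw [goldenRatio, goldenConj]; ring
  | n + 2 => by
      rw [lucas]
      push_cast
      rw [lucas_real n, lucas_real (n + 1)]
      have h1 : goldenRatio ^ (n + 2) = goldenRatio ^ n * goldenRatio ^ 2 := by ring
      have h2 : goldenConj ^ (n + 2) = goldenConj ^ n * goldenConj ^ 2 := by ring
      rw [h1, h2, goldenRatio_sq, goldenConj_sq]; ring

lemma aux (a b : ℝ) (hab : a * b = -1) (m : ℕ) :
    a ^ (2 * m + 1) - b ^ (2 * m + 1) =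
      (a - b) * ((-1) ^ m +
        ∑ k ∈ Finset.range m, (-1) ^ k * (a ^ (2 * (m - k)) + b ^ (2 * (m - k)))) := by
  induction m with
  | zero => simp
  | succ m ih =>
      rw [Finset.sum_range_succ']
      have hk : ∀ k ∈ Finset.range m,
          ((-1 : ℝ)) ^ (k + 1) * (a ^ (2 * (m + 1 - (k + 1))) + b ^ (2 * (m + 1 - (k + 1)))) =
          -((-1) ^ k * (a ^ (2 * (m - k)) + b ^ (2 * (m - k)))) := by
        intro k _
        rw [Nat.succ_sub_succ]
        ring
      rw [Finset.sum_congr rfl hk, Finset.sum_neg_distrib]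
      simp only [Nat.sub_zero, pow_zero, one_mul]
      have h1 : 2 * (m + 1) + 1 = 2 * m + 1 + 2 := by ring
      have h2 : 2 * (m + 1) = 2 * m + 2 := by ring
      rw [h1, h2]
      linear_combination (a ^ (2 * m + 1) - b ^ (2 * m + 1)) * hab - ih

lemma step (m r N : ℕ) (hN : N = 2 * r + 1) :
    (Nat.fib ((2 * m + 1) * N) : ℝ) =
      (Nat.fib N : ℝ) * ((-1) ^ m +
        ∑ k ∈ Finset.range m, (-1) ^ k * (lucas (2 * (m - k) * N) : ℝ)) := by
  have hab : goldenRatio ^ N * goldenConj ^ N = -1 := by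
    rw [← mul_pow, goldenRatio_mul_goldenConj, hN, pow_succ, pow_mul]
    norm_num
  have key := aux (goldenRatio ^ N) (goldenConj ^ N) hab m
  rw [Real.coe_fib_eq, Real.coe_fib_eq]
  have hs : ∀ k ∈ Finset.range m,
      ((-1 : ℝ)) ^ k * (lucas (2 * (m - k) * N) : ℝ) =
      (-1) ^ k * ((goldenRatio ^ N) ^ (2 * (m - k)) + (goldenConj ^ N) ^ (2 * (m - k))) := by
    intro k _
    rw [lucas_real, ← pow_mul, ← pow_mul, mul_comm (2 * (m - k)) N, pow_mul, pow_mul]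
  rw [Finset.sum_congr rfl hs, mul_comm (2 * m + 1) N, pow_mul, pow_mul, key]
  ring

theorem stmt5 (m n : ℕ) (hm : 0 < m) (hn : 1 ≤ n) :
    (Nat.fib ((2 * m + 1) ^ n) : ℤ) =
      ∏ j ∈ Finset.range n,
        ((-1) ^ m +
          ∑ k ∈ Finset.range m, (-1) ^ k * (lucas (2 * (m - k) * (2 * m + 1) ^ j) : ℤ)) := by
  have main : ∀ n : ℕ, (Nat.fib ((2 * m + 1) ^ n) : ℝ) =
      ∏ j ∈ Finset.range n,
        ((-1) ^ m +
          ∑ k ∈ Finset.range m, (-1) ^ k * (lucas (2 * (m - k) * (2 * m + 1) ^ j) : ℝ)) := by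
    intro n
    induction n with
    | zero => simp
    | succ n ih =>
        obtain ⟨r, hr⟩ : Odd ((2 * m + 1) ^ n) := Odd.pow ⟨m, by ring⟩
        rw [Finset.prod_range_succ, ← ih, pow_succ, mul_comm ((2 * m + 1) ^ n) (2 * m + 1)]
        exact step m r _ (by omega)
  exact_mod_cast main n
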